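/- Let $u : \mathbb{R} \to \mathbb{R}$ be three times continuously differentiable with $|u'''(x)| \leq M$ for all $x$, let $x_i \in \mathbb{R}$, let $(x_j)_{j \in S}$ be a finite family of points with displacements $\Delta x_j = x_j - x_i$, and let $(\kappa_j)_{j \in S}$ be coefficients satisfying the consistency conditions $\sum_{j} \kappa_j \Delta x_j = 1$ and $\sum_{j} \kappa_j \Delta x_j^2 = 0$. Then the midpoint-based derivative approximation satisfies the second-order error bound $\Big| 2 \sum_{j \in S} \kappa_j \Big( u\big(\tfrac{x_i + x_j}{2}\big) - u(x_i) \Big) - u'(x_i) \Big| \leq \frac{M}{24} \sum_{j \in S} |\kappa_j|\, |\Delta x_j|^3.$ -/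

import Mathlib

open Finset Set

lemma itD_eq {u : ℝ → ℝ} (hu : ContDiff ℝ 3 u) {n : ℕ} (hn : n ≤ 3) {s : Set ℝ}
    (hs : UniqueDiffOn ℝ s) {y : ℝ} (hy : y ∈ s) :
    iteratedDerivWithin n u s y = iteratedDeriv n u y := by
  rw [iteratedDerivWithin_eq_iteratedFDerivWithin, iteratedDeriv_eq_iteratedFDeriv]
  congr 1
  exact (((contDiff_iff_ftaylorSeries.mp hu).hasFTaylorSeriesUpToOn s).eq_iteratedFDerivWithin_of_uniqueDiffOn
    (by exact_mod_cast hn) hs hy).symm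

lemma keyPos (u : ℝ → ℝ) (M : ℝ) (hu : ContDiff ℝ 3 u)
    (hM : ∀ y : ℝ, |iteratedDeriv 3 u y| ≤ M) (a h : ℝ) (hh : 0 < h) :
    |u (a + h) - u a - deriv u a * h - iteratedDeriv 2 u a * h ^ 2 / 2| ≤ M * h ^ 3 / 6 := by
  have hab : a < a + h := by linarith
  have hud : UniqueDiffOn ℝ (Icc a (a + h)) := uniqueDiffOn_Icc hab
  have hf' : DifferentiableOn ℝ (iteratedDerivWithin 2 u (Icc a (a + h))) (Ioo a (a + h)) := by
    refine ((hu.differentiable_iteratedDeriv 2 (by norm_num)).differentiableOn).congr ?_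
    intro y hy
    exact itD_eq hu (by norm_num) hud (Ioo_subset_Icc_self hy)
  obtain ⟨x', hx', hR⟩ := taylor_mean_remainder_lagrange (n := 2) hab.ne
    (by rw [uIcc_of_le hab.le]; exact hu.contDiffOn.of_le (by norm_num))
    (by rw [uIcc_of_le hab.le, uIoo_of_lt hab]; exact hf')
  rw [uIoo_of_lt hab] at hx'
  rw [uIcc_of_le hab.le] at hR
  have ha : a ∈ Icc a (a + h) := ⟨le_refl a, hab.le⟩
  have hT : taylorWithinEval u 2 (Icc a (a + h)) a (a + h) =
      u a + deriv u a * h + iteratedDeriv 2 u a * h ^ 2 / 2 := by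
    rw [taylor_within_apply]
    rw [Finset.sum_range_succ, Finset.sum_range_succ, Finset.sum_range_one]
    rw [itD_eq hu (by norm_num) hud ha, itD_eq hu (by norm_num) hud ha,
      itD_eq hu (by norm_num) hud ha]
    simp [iteratedDeriv_one]
    ring
  have h3 : |iteratedDerivWithin 3 u (Icc a (a + h)) x'| ≤ M := by
    rw [itD_eq hu le_rfl hud (Ioo_subset_Icc_self hx')]
    exact hM x'
  have : u (a + h) - u a - deriv u a * h - iteratedDeriv 2 u a * h ^ 2 / 2 =
      iteratedDerivWithin 3 u (Icc a (a + h)) x' * h ^ 3 / 6 := by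
    have := hR
    rw [hT] at this
    have e : (a + h - a) = h := by ring
    rw [e] at this
    norm_num [Nat.factorial] at this ⊢
    linarith
  rw [this, abs_div, abs_mul, abs_pow, abs_of_pos hh,
    abs_of_nonneg (by norm_num : (0:ℝ) ≤ 6)]
  have hb : |iteratedDerivWithin 3 u (Icc a (a + h)) x'| * h ^ 3 ≤ M * h ^ 3 :=
    mul_le_mul_of_nonneg_right h3 (by positivity)
  linarith

lemma key (u : ℝ → ℝ) (M : ℝ) (hu : ContDiff ℝ 3 u)
    (hM : ∀ y : ℝ, |iteratedDeriv 3 u y| ≤ M) (a h : ℝ) :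
    |u (a + h) - u a - deriv u a * h - iteratedDeriv 2 u a * h ^ 2 / 2| ≤ M * |h| ^ 3 / 6 := by
  rcases lt_trichotomy h 0 with hneg | rfl | hpos
  · -- reflect
    set v : ℝ → ℝ := fun y => u (2 * a - y) with hv
    have hvc : ContDiff ℝ 3 v := hu.comp (contDiff_const.sub contDiff_id)
    have hvd : ∀ n : ℕ, ∀ y : ℝ, iteratedDeriv n v y = (-1 : ℝ) ^ n * iteratedDeriv n u (2 * a - y) := by
      intro n y
      have e1 : v = fun t => (fun z => u (2 * a + z)) (-t) := by
        funext t; simp [hv, sub_eq_add_neg]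
      have h0 := iteratedDeriv_comp_neg n (fun z : ℝ => u (2 * a + z)) y
      have h1 := congrFun (iteratedDeriv_comp_const_add n u (2 * a)) (-y)
      rw [e1]
      rw [h0, h1]
      simp [sub_eq_add_neg]
    have hMv : ∀ y : ℝ, |iteratedDeriv 3 v y| ≤ M := by
      intro y
      rw [hvd 3 y]
      simp only [abs_mul, abs_pow, abs_neg, abs_one, one_pow, one_mul]
      exact hM _
    have := keyPos v M hvc hMv a (-h) (by linarith)
    have e2 : v (a + -h) = u (a + h) := by simp [hv]; ring_nf
    have e3 : v a = u a := by simp [hv]; ring_nf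
    have e4 : deriv v a = - deriv u a := by
      have h4 := hvd 1 a
      have ea : 2 * a - a = a := by ring
      rw [ea] at h4
      simpa [iteratedDeriv_one] using h4
    have e5 : iteratedDeriv 2 v a = iteratedDeriv 2 u a := by
      have h5 := hvd 2 a
      have ea : 2 * a - a = a := by ring
      rw [ea] at h5
      simpa using h5
    rw [e2, e3, e4, e5] at this
    have e6 : u (a + h) - u a - -deriv u a * -h - iteratedDeriv 2 u a * (-h) ^ 2 / 2 =
        u (a + h) - u a - deriv u a * h - iteratedDeriv 2 u a * h ^ 2 / 2 := by ring
    rw [e6] at this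
    have e7 : (-h) ^ 3 = |h| ^ 3 := by
      rw [abs_of_neg hneg]
    rw [e7] at this
    exact this
  · simp
  · have := keyPos u M hu hM a h hpos
    rwa [abs_of_pos hpos]


/-- **Second-order consistency of the midpoint-based MUSCL derivative.**
If `u` is `C³` with `|u'''| ≤ M` and the coefficients `κ j` satisfy the consistency
conditions `∑ κ j Δx j = 1` and `∑ κ j Δx j² = 0`, then the midpoint-based derivative
approximation `2 ∑ κ j (u((x_i + x_j)/2) - u(x_i))` approximates `u'(x_i)` with error
at most `(M/24) ∑ |κ j| |Δx j|³`. -/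
theorem stmt_11 {ι : Type*} (S : Finset ι) (u : ℝ → ℝ) (M : ℝ)
    (hu : ContDiff ℝ 3 u) (hM : ∀ x : ℝ, |iteratedDeriv 3 u x| ≤ M)
    (xi : ℝ) (x : ι → ℝ) (κ : ι → ℝ)
    (h1 : ∑ j ∈ S, κ j * (x j - xi) = 1)
    (h2 : ∑ j ∈ S, κ j * (x j - xi) ^ 2 = 0) :
    |2 * (∑ j ∈ S, κ j * (u ((xi + x j) / 2) - u xi)) - deriv u xi| ≤
      M / 24 * ∑ j ∈ S, |κ j| * |x j - xi| ^ 3 := by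
  set R : ι → ℝ := fun j => u (xi + (x j - xi) / 2) - u xi - deriv u xi * ((x j - xi) / 2)
    - iteratedDeriv 2 u xi * ((x j - xi) / 2) ^ 2 / 2 with hRdef
  have hRb : ∀ j, |R j| ≤ M * |x j - xi| ^ 3 / 48 := by
    intro j
    have := key u M hu hM xi ((x j - xi) / 2)
    have e : M * |(x j - xi) / 2| ^ 3 / 6 = M * |x j - xi| ^ 3 / 48 := by
      rw [abs_div]
      norm_num
      ring
    rwa [e] at this
  have key_eq : 2 * (∑ j ∈ S, κ j * (u ((xi + x j) / 2) - u xi)) - deriv u xi =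
      2 * ∑ j ∈ S, κ j * R j := by
    have e1 : ∀ j ∈ S, κ j * (u ((xi + x j) / 2) - u xi) =
        deriv u xi / 2 * (κ j * (x j - xi)) +
        iteratedDeriv 2 u xi / 8 * (κ j * (x j - xi) ^ 2) + κ j * R j := by
      intro j _
      have em : (xi + x j) / 2 = xi + (x j - xi) / 2 := by ring
      rw [em, hRdef]
      ring
    rw [Finset.sum_congr rfl e1]
    rw [Finset.sum_add_distrib, Finset.sum_add_distrib, ← Finset.mul_sum, ← Finset.mul_sum, h1, h2]
    ring
  rw [key_eq]
  have hb : |2 * ∑ j ∈ S, κ j * R j| ≤ 2 * ∑ j ∈ S, |κ j| * (M * |x j - xi| ^ 3 / 48) := by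
    rw [abs_mul, abs_of_nonneg (by norm_num : (0:ℝ) ≤ 2)]
    gcongr
    calc |∑ j ∈ S, κ j * R j| ≤ ∑ j ∈ S, |κ j * R j| := Finset.abs_sum_le_sum_abs _ _
      _ ≤ ∑ j ∈ S, |κ j| * (M * |x j - xi| ^ 3 / 48) := by
        apply Finset.sum_le_sum
        intro j _
        rw [abs_mul]
        exact mul_le_mul_of_nonneg_left (hRb j) (abs_nonneg _)
  refine hb.trans_eq ?_
  rw [Finset.mul_sum, Finset.mul_sum]
  apply Finset.sum_congr rfl
  intro j _
  ring
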